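/- Let B be the incidence matrix of a connected oriented hypergraph with all vertex degrees positive, and let f be an eigenfunction achieving λ_N. If λ_N = max_h |h|, then |f| is constant on V. -/

import Mathlib

open Finset

/-- For a connected oriented hypergraph with positive degrees, if `f`
is an eigenfunction achieving the largest normalized Laplacian eigenvalue `λ_N` and
`λ_N = max_h |h|`, then `|f|` is constant on `V`. -/
lemma sq_sum_identity {ι : Type*} (S : Finset ι) (x : ι → ℝ) :
    ∑ v ∈ S, ∑ w ∈ S, (x v - x w)^2
      = 2 * ((S.card : ℝ) * ∑ v ∈ S, x v ^ 2) - 2 * (∑ v ∈ S, x v)^2 := by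
  have h : ∀ v w : ι, (x v - x w)^2 = x v ^ 2 - 2*(x v * x w) + x w ^ 2 := by
    intros; ring
  simp_rw [h, Finset.sum_add_distrib, Finset.sum_sub_distrib, Finset.sum_const,
    ← Finset.mul_sum, ← Finset.sum_mul, nsmul_eq_mul]
  rw [← Finset.mul_sum]
  ring

lemma chain_rel {α : Type*} {R R' : α → α → Prop} (hRR' : ∀ a b, R a b → R' a b)
    (htrans : Transitive R') (hrefl : Reflexive R') :
    ∀ l : List α, l.Chain' R → ∀ v w, l.head? = some v → l.getLast? = some w → R' v w := by
  intro l
  induction l with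
  | nil => intro _ v w hv _; simp at hv
  | cons a l ih =>
    intro hc v w hv hw
    simp at hv; subst hv
    cases l with
    | nil => simp at hw; subst hw; exact hrefl _
    | cons b l' =>
      replace hc := List.isChain_cons_cons.mp hc
      rw [List.getLast?_cons_cons] at hw
      exact htrans (hRR' _ _ hc.1) (ih hc.2 b w rfl hw)

theorem rigidity_abs_constant {M N : ℕ} (B : Matrix (Fin M) (Fin N) ℝ)
    (hB : ∀ h v, B h v = -1 ∨ B h v = 0 ∨ B h v = 1)
    (deg : Fin N → ℕ)
    (hdeg : ∀ v, deg v = (univ.filter fun h => B h v ≠ 0).card)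
    (hdegpos : ∀ v, 0 < deg v)
    (card : Fin M → ℕ)
    (hcard : ∀ h, card h = (univ.filter fun v => B h v ≠ 0).card)
    (hconn : ∀ v w : Fin N, ∃ l : List (Fin N),
      l.head? = some v ∧ l.getLast? = some w ∧
      l.Chain' (fun a b => ∃ h, B h a ≠ 0 ∧ B h b ≠ 0))
    (lam : ℝ)
    (hlam : IsGreatest {r : ℝ | ∃ f : Fin N → ℝ, f ≠ 0 ∧
      r = (∑ h, (∑ v, B h v * f v) ^ 2) / (∑ v, (deg v : ℝ) * f v ^ 2)} lam)
    (f : Fin N → ℝ) (hf : f ≠ 0)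
    (hfeig : (∑ h, (∑ v, B h v * f v) ^ 2) / (∑ v, (deg v : ℝ) * f v ^ 2) = lam)
    (heq : lam = (univ.sup card : ℕ)) :
    ∃ c : ℝ, ∀ v, |f v| = c := by
  classical
  set S : Fin M → Finset (Fin N) := fun h => univ.filter fun v => B h v ≠ 0 with hS
  -- basic facts
  have hBsq : ∀ h v, v ∈ S h → (B h v)^2 = 1 := by
    intro h v hv
    rw [hS, mem_filter] at hv
    rcases hB h v with h1 | h1 | h1 <;> simp [h1] at hv ⊢
  have hrow : ∀ h, ∑ v, B h v * f v = ∑ v ∈ S h, B h v * f v := by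
    intro h
    refine (Finset.sum_subset (Finset.filter_subset _ _) ?_).symm
    intro v _ hv
    simp only [Finset.mem_filter, Finset.mem_univ, true_and, not_not] at hv
    simp [hv]
  have hxsq : ∀ h, ∑ v ∈ S h, (B h v * f v)^2 = ∑ v ∈ S h, f v ^ 2 := by
    intro h
    refine Finset.sum_congr rfl fun v hv => ?_
    rw [mul_pow, hBsq h v hv, one_mul]
  -- denominator positive
  obtain ⟨v0, hv0⟩ := Function.ne_iff.mp hf
  have hD : 0 < ∑ v, (deg v : ℝ) * f v ^ 2 := by
    refine Finset.sum_pos' (fun v _ => by positivity) ⟨v0, mem_univ _, ?_⟩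
    have h1 : (0:ℝ) < deg v0 := by exact_mod_cast hdegpos v0
    have h2 : 0 < f v0 ^ 2 := lt_of_le_of_ne (sq_nonneg _) (Ne.symm (pow_ne_zero 2 hv0))
    exact mul_pos h1 h2
  set D := ∑ v, (deg v : ℝ) * f v ^ 2 with hDdef
  have hnum : ∑ h, (∑ v, B h v * f v)^2 = ((univ.sup card : ℕ) : ℝ) * D := by
    rw [div_eq_iff hD.ne'] at hfeig
    rw [hfeig, heq]
  -- swap sums
  have hswap : ∑ h, ∑ v ∈ S h, f v ^ 2 = D := by
    simp_rw [hS, Finset.sum_filter]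
    rw [Finset.sum_comm]
    refine Finset.sum_congr rfl fun v _ => ?_
    rw [← Finset.sum_filter, Finset.sum_const, nsmul_eq_mul, hdeg v]
  -- the two slack terms
  set g : Fin M → ℝ := fun h => (card h : ℝ) * ∑ v ∈ S h, f v ^ 2 - (∑ v, B h v * f v)^2
    with hgdef
  set t : Fin M → ℝ := fun h => (((univ.sup card : ℕ) : ℝ) - card h) * ∑ v ∈ S h, f v ^ 2
    with htdef
  have hg_eq : ∀ h, ∑ v ∈ S h, ∑ w ∈ S h, (B h v * f v - B h w * f w)^2 = 2 * g h := by
    intro h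
    rw [sq_sum_identity (S h) (fun v => B h v * f v), hxsq, ← hrow, hgdef]
    have : ((S h).card : ℝ) = (card h : ℝ) := by rw [hcard]
    rw [this]; ring
  have hg_nonneg : ∀ h, 0 ≤ g h := by
    intro h
    have h1 : 0 ≤ ∑ v ∈ S h, ∑ w ∈ S h, (B h v * f v - B h w * f w)^2 :=
      Finset.sum_nonneg fun v _ => Finset.sum_nonneg fun w _ => sq_nonneg _
    rw [hg_eq h] at h1; linarith
  have ht_nonneg : ∀ h, 0 ≤ t h := by
    intro h
    have h1 : (card h : ℝ) ≤ ((univ.sup card : ℕ) : ℝ) := by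
      exact_mod_cast Finset.le_sup (mem_univ h)
    have h2 : 0 ≤ ∑ v ∈ S h, f v ^ 2 := Finset.sum_nonneg fun v _ => sq_nonneg _
    rw [htdef]
    exact mul_nonneg (by linarith) h2
  have hsum : ∑ h, (g h + t h) = 0 := by
    have : ∀ h : Fin M, g h + t h
        = ((univ.sup card : ℕ) : ℝ) * ∑ v ∈ S h, f v ^ 2 - (∑ v, B h v * f v)^2 := by
      intro h; rw [hgdef, htdef]; ring
    simp_rw [this, Finset.sum_sub_distrib, ← Finset.mul_sum, hswap, hnum, sub_self]
  have hzero : ∀ h : Fin M, g h + t h = 0 := by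
    intro h
    have := (Finset.sum_eq_zero_iff_of_nonneg
      (fun h _ => add_nonneg (hg_nonneg h) (ht_nonneg h))).mp hsum
    exact this h (mem_univ h)
  have hg0 : ∀ h, g h = 0 := fun h => le_antisymm (by linarith [hzero h, ht_nonneg h])
    (hg_nonneg h)
  -- Cauchy-Schwarz rigidity within each hyperedge
  have hconst : ∀ h, ∀ v ∈ S h, ∀ w ∈ S h, B h v * f v = B h w * f w := by
    intro h v hv w hw
    have h1 : ∑ v ∈ S h, ∑ w ∈ S h, (B h v * f v - B h w * f w)^2 = 0 := by
      rw [hg_eq h, hg0 h]; ring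
    have h2 := (Finset.sum_eq_zero_iff_of_nonneg
      (fun v _ => Finset.sum_nonneg fun w _ => sq_nonneg _)).mp h1 v hv
    have h3 := (Finset.sum_eq_zero_iff_of_nonneg (fun w _ => sq_nonneg _)).mp h2 w hw
    have := pow_eq_zero_iff (n := 2) (by norm_num) |>.mp h3
    linarith [this]
  -- adjacency implies equal absolute values
  have hadj : ∀ a b : Fin N, (∃ h, B h a ≠ 0 ∧ B h b ≠ 0) → |f a| = |f b| := by
    rintro a b ⟨h, ha, hb⟩
    have hma : a ∈ S h := by rw [hS, mem_filter]; exact ⟨mem_univ _, ha⟩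
    have hmb : b ∈ S h := by rw [hS, mem_filter]; exact ⟨mem_univ _, hb⟩
    have h1 := hconst h a hma b hmb
    have h2 : |B h a| = 1 := by rcases hB h a with h' | h' | h' <;> simp [h'] at ha ⊢
    have h3 : |B h b| = 1 := by rcases hB h b with h' | h' | h' <;> simp [h'] at hb ⊢
    have : |B h a * f a| = |B h b * f b| := by rw [h1]
    rwa [abs_mul, abs_mul, h2, h3, one_mul, one_mul] at this
  -- connectivity
  refine ⟨|f v0|, fun v => ?_⟩
  obtain ⟨l, hhead, hlast, hchain⟩ := hconn v0 v
  exact (chain_rel hadj (fun a b c hab hbc => hab.trans hbc) (fun a => rfl)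
    l hchain v0 v hhead hlast).symm
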